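/- Let N be a positive integer, L ∈ ℤ_{≥0}^N, ℓ = T^{-1}L, and a such that a + ℓ_N/2 ∈ ℤ_{≥0}. Then the coefficient of x^{a+ℓ_N/2} in the polynomial ∏_{j=1}^N (1+x+⋯+x^j)^{L_j} equals Σ_{j_1+⋯+j_N = a+ℓ_N/2, j_i∈ℤ_{≥0}} ∏_{k=1}^N C(L_k + j_{k+1}, j_k), where j_{N+1}=0 and C(·,·) denotes the ordinary binomial coefficient. -/

import Mathlib

open scoped BigOperators

private lemma key_supernomial (L : ℕ → ℕ) (k : ℕ) : ∀ M m : ℕ,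
    ∑ f ∈ (Finset.Icc 1 k).piAntidiag m,
      ∏ i ∈ Finset.Icc 1 k, ((L i + (if i = k then M else f (i+1))).choose (f i) : ℚ)
    = ((∏ i ∈ Finset.Icc 1 k,
          (∑ t ∈ Finset.range (i+1), (Polynomial.X : Polynomial ℚ) ^ t) ^ L i) *
        (∑ t ∈ Finset.range (k+1), (Polynomial.X : Polynomial ℚ) ^ t) ^ M).coeff m := by
  induction k with
  | zero =>
    intro M m
    rw [show Finset.Icc 1 0 = ∅ from Finset.Icc_eq_empty (by omega)]
    simp [Finset.piAntidiag_empty, Polynomial.coeff_one]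
    split_ifs <;> simp [*]
  | succ k ih =>
    intro M m
    have hmem : (k+1) ∉ Finset.Icc 1 k := by simp
    have hcons : Finset.Icc 1 (k+1) = Finset.cons (k+1) (Finset.Icc 1 k) hmem := by
      ext x; simp [Finset.mem_Icc, Finset.mem_cons]; omega
    set Pk : Polynomial ℚ := ∑ t ∈ Finset.range (k+1), (Polynomial.X : Polynomial ℚ) ^ t with hPk
    set Q : Polynomial ℚ := ∏ i ∈ Finset.Icc 1 k,
      (∑ t ∈ Finset.range (i+1), (Polynomial.X : Polynomial ℚ) ^ t) ^ L i with hQ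
    set n : ℕ := L (k+1) + M with hn
    set F : ℕ → ℚ := fun t => (n.choose t : ℚ) * ((Q * Pk ^ t) * Polynomial.X ^ t).coeff m with hF
    have hL : (∑ f ∈ (Finset.Icc 1 (k+1)).piAntidiag m,
        ∏ i ∈ Finset.Icc 1 (k+1), ((L i + (if i = k+1 then M else f (i+1))).choose (f i) : ℚ))
        = ∑ t ∈ Finset.range (m+1), F t := by
      rw [hcons, Finset.piAntidiag_cons hmem, Finset.sum_disjiUnion]
      have step1 : ∀ p ∈ Finset.HasAntidiagonal.antidiagonal m,
          (∑ f ∈ ((Finset.Icc 1 k).piAntidiag p.2).map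
              (addRightEmbedding fun t => if t = k+1 then p.1 else 0),
            ∏ i ∈ Finset.cons (k+1) (Finset.Icc 1 k) hmem,
              ((L i + (if i = k+1 then M else f (i+1))).choose (f i) : ℚ))
          = ((L (k+1) + M).choose p.1 : ℚ) *
            ∑ g ∈ (Finset.Icc 1 k).piAntidiag p.2,
              ∏ i ∈ Finset.Icc 1 k, ((L i + (if i = k then p.1 else g (i+1))).choose (g i) : ℚ) := by
        rintro ⟨a, b⟩ -
        rw [Finset.sum_map, Finset.mul_sum]
        refine Finset.sum_congr rfl fun g hg => ?_
        have hg' := (Finset.mem_piAntidiag.mp hg).2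
        have hgk1 : g (k+1) = 0 := by
          by_contra h
          exact absurd (hg' _ h) (by simp)
        rw [Finset.prod_cons]
        simp only [addRightEmbedding_apply, Pi.add_apply]
        congr 1
        · simp [hgk1]
        · refine Finset.prod_congr rfl fun i hi => ?_
          rw [Finset.mem_Icc] at hi
          have h1 : i ≠ k + 1 := by omega
          have h2 : ¬ (i + 1 = k + 1) ∨ i = k := by omega
          rcases eq_or_ne i k with rfl | hik
          · simp [hgk1]
          · have : i + 1 ≠ k + 1 := by omega
            simp [h1, this, hik]
      rw [Finset.sum_congr rfl step1]
      have step2 : ∀ p ∈ Finset.HasAntidiagonal.antidiagonal m,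
          ((L (k+1) + M).choose p.1 : ℚ) *
            ∑ g ∈ (Finset.Icc 1 k).piAntidiag p.2,
              ∏ i ∈ Finset.Icc 1 k, ((L i + (if i = k then p.1 else g (i+1))).choose (g i) : ℚ)
          = (n.choose p.1 : ℚ) * ((Q * Pk ^ p.1).coeff p.2) := by
        rintro ⟨a, b⟩ -
        rw [ih a b]
      rw [Finset.sum_congr rfl step2, Finset.Nat.sum_antidiagonal_eq_sum_range_succ_mk]
      refine Finset.sum_congr rfl fun t ht => ?_
      rw [Finset.mem_range] at ht
      simp only [hF]
      rw [Polynomial.coeff_mul_X_pow', if_pos (by omega)]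
    have hR : ((∏ i ∈ Finset.Icc 1 (k+1),
          (∑ t ∈ Finset.range (i+1), (Polynomial.X : Polynomial ℚ) ^ t) ^ L i) *
        (∑ t ∈ Finset.range (k+1+1), (Polynomial.X : Polynomial ℚ) ^ t) ^ M).coeff m
        = ∑ t ∈ Finset.range (n+1), F t := by
      have hP : (∑ t ∈ Finset.range (k+1+1), (Polynomial.X : Polynomial ℚ) ^ t)
          = Polynomial.X * Pk + 1 := by
        rw [Finset.sum_range_succ' (fun t => (Polynomial.X : Polynomial ℚ) ^ t), hPk,
          Finset.mul_sum]
        simp [pow_succ, mul_comm]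
      rw [hcons, Finset.prod_cons, hP]
      have hcomb : ((Polynomial.X * Pk + 1) ^ L (k+1) * Q) * (Polynomial.X * Pk + 1) ^ M
          = Q * (Polynomial.X * Pk + 1) ^ n := by
        rw [hn, pow_add]; ring
      rw [hcomb, add_pow]
      rw [Finset.mul_sum, Polynomial.finset_sum_coeff]
      refine Finset.sum_congr rfl fun t ht => ?_
      simp only [hF]
      have : Q * ((Polynomial.X * Pk) ^ t * 1 ^ (n - t) * ((n.choose t : ℕ) : Polynomial ℚ))
          = ((Q * Pk ^ t) * Polynomial.X ^ t) * Polynomial.C ((n.choose t : ℕ) : ℚ) := by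
        rw [Polynomial.C_eq_natCast, mul_pow]; ring
      rw [this, Polynomial.coeff_mul_C]
      ring
    rw [hL, hR]
    have hF1 : ∀ t, m < t → F t = 0 := by
      intro t ht
      simp only [hF]; rw [Polynomial.coeff_mul_X_pow', if_neg (by omega), mul_zero]
    have hF2 : ∀ t, n < t → F t = 0 := by
      intro t ht
      simp only [hF]; rw [Nat.choose_eq_zero_of_lt ht]
      simp
    rw [Finset.sum_subset (Finset.range_subset_range.2 (by omega : m + 1 ≤ m + n + 2))
        (fun t _ ht => hF1 t (by simp at ht ⊢; omega)),
      Finset.sum_subset (Finset.range_subset_range.2 (by omega : n + 1 ≤ m + n + 2))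
        (fun t _ ht => hF2 t (by simp at ht ⊢; omega))]

/-- For `N` positive, `L ∈ ℤ_{≥0}^N` (1-based, entries `L 1, …, L N`),
`ℓ = T⁻¹L` (so `ℓ_N = Σ_j min{N,j} L_j`), and `a` with `a + ℓ_N/2 = c ∈ ℤ_{≥0}`,
the coefficient of `x^c` in `∏_{j=1}^N (1+x+⋯+x^j)^{L_j}` equals
`Σ_{j_1+⋯+j_N=c} ∏_{k=1}^N C(L_k + j_{k+1}, j_k)` with `j_{N+1} = 0`. -/
theorem supernomial_eq_sum_of_binomials
    (N : ℕ) (hN : 0 < N) (L : ℕ → ℕ) (a : ℚ) (c : ℕ)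
    (hc : a + (∑ j ∈ Finset.Icc 1 N, (min N j : ℚ) * L j) / 2 = c) :
    (∏ j ∈ Finset.Icc 1 N,
        (∑ t ∈ Finset.range (j + 1), (Polynomial.X : Polynomial ℚ) ^ t) ^ L j).coeff c
    = ∑' jj : {jj : ℕ → ℕ //
        (∀ k, (k = 0 ∨ N < k) → jj k = 0) ∧ ∑ k ∈ Finset.Icc 1 N, jj k = c},
        ∏ k ∈ Finset.Icc 1 N, (Nat.choose (L k + jj.1 (k + 1)) (jj.1 k) : ℚ) := by
  have key := key_supernomial L N 0 c
  have hiff : ∀ x : ℕ → ℕ,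
      ((∀ k, (k = 0 ∨ N < k) → x k = 0) ∧ ∑ k ∈ Finset.Icc 1 N, x k = c)
      ↔ x ∈ (Finset.Icc 1 N).piAntidiag c := by
    intro x
    rw [Finset.mem_piAntidiag]
    constructor
    · rintro ⟨h1, h2⟩
      refine ⟨h2, fun i hi => ?_⟩
      rw [Finset.mem_Icc]
      by_contra h
      exact hi (h1 i (by omega))
    · rintro ⟨h2, h1⟩
      refine ⟨fun i hi => ?_, h2⟩
      by_contra h
      have := h1 i h
      rw [Finset.mem_Icc] at this
      omega
  rw [← Equiv.tsum_eq (Equiv.subtypeEquivRight hiff).symm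
      (fun jj => ∏ k ∈ Finset.Icc 1 N, (Nat.choose (L k + jj.1 (k + 1)) (jj.1 k) : ℚ))]
  simp only [Equiv.subtypeEquivRight_symm_apply]
  rw [Finset.tsum_subtype ((Finset.Icc 1 N).piAntidiag c)
      (fun f => ∏ k ∈ Finset.Icc 1 N, (Nat.choose (L k + f (k + 1)) (f k) : ℚ))]
  rw [pow_zero, mul_one] at key
  rw [← key]
  refine Finset.sum_congr rfl fun f hf => Finset.prod_congr rfl fun i hi => ?_
  rcases eq_or_ne i N with rfl | h
  · have hf' := (Finset.mem_piAntidiag.mp hf).2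
    have h0 : f (i+1) = 0 := by
      by_contra h0
      have := hf' _ h0
      rw [Finset.mem_Icc] at this
      omega
    simp [h0]
  · simp [h]
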